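/- arXiv:1805.11955 — 3 statements merged into one kernel-verified Lean document; each statement's English description precedes it below -/
import Mathlib

section
/- Let S be an inverse semigroup and let R be a system over S that is coherent, system simple, and left (or right) s-unital epsilon-strong. If C_R(Z(R_0)) ⊆ R_0, then R is a simple ring. -/
open Pointwise

namespace PaperSys

variable {S R : Type*} [Semigroup S] [NonUnitalRing R]

/-- The additive subgroup of finite sums of products `a * b` with `a ∈ A`, `b ∈ B`. -/
def sumProd (A B : AddSubgroup R) : AddSubgroup R :=
  AddSubgroup.closure ((A : Set R) * (B : Set R))

/-- `𝓡` is a system over the semigroup `S` on the ring `R`: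
`R = Σ_{s ∈ S} R_s` and `R_s R_t ⊆ R_{st}`. -/
def IsSystem (𝓡 : S → AddSubgroup R) : Prop :=
  (⨆ s : S, 𝓡 s) = (⊤ : AddSubgroup R) ∧
    ∀ s t : S, ∀ x ∈ 𝓡 s, ∀ y ∈ 𝓡 t, x * y ∈ 𝓡 (s * t)

/-- `R₀ = Σ_{e ∈ E(S)} R_e`. -/
def sysZero (𝓡 : S → AddSubgroup R) : AddSubgroup R :=
  ⨆ e ∈ {e : S | e * e = e}, 𝓡 e

/-- `I` is a two-sided ideal of the (possibly non-unital) ring `R`. -/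
def IsRingIdeal (I : AddSubgroup R) : Prop :=
  ∀ r : R, ∀ x ∈ I, r * x ∈ I ∧ x * r ∈ I

/-- `I` is a system ideal: an ideal with `I = Σ_{s ∈ S} (I ∩ R_s)`. -/
def IsSystemIdeal (𝓡 : S → AddSubgroup R) (I : AddSubgroup R) : Prop :=
  IsRingIdeal I ∧ I = ⨆ s : S, (I ⊓ 𝓡 s)

/-- `R` is system simple: `{0}` and `R` are the only system ideals. -/
def SystemSimple (𝓡 : S → AddSubgroup R) : Prop :=
  ∀ I : AddSubgroup R, IsSystemIdeal 𝓡 I → I = ⊥ ∨ I = ⊤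

/-- `R` is a simple ring: `{0}` and `R` are the only two-sided ideals. -/
def RingSimple (R' : Type*) [NonUnitalRing R'] : Prop :=
  ∀ I : AddSubgroup R', IsRingIdeal I → I = ⊥ ∨ I = ⊤

/-- `Z(R₀)` as a subset of `R`. -/
def centerZero (𝓡 : S → AddSubgroup R) : Set R :=
  {z : R | z ∈ sysZero 𝓡 ∧ ∀ y ∈ sysZero 𝓡, z * y = y * z}

/-- `C_R(Z(R₀))` as a subset of `R`. -/
def centCenterZero (𝓡 : S → AddSubgroup R) : Set R :=
  {x : R | ∀ z ∈ centerZero 𝓡, x * z = z * x}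

/-- The system is idempotent coherent: `R₀ R_s ⊆ R_s` and `R_s R₀ ⊆ R_s`. -/
def IdemCoherent (𝓡 : S → AddSubgroup R) : Prop :=
  ∀ s : S, (∀ x ∈ sysZero 𝓡, ∀ y ∈ 𝓡 s, x * y ∈ 𝓡 s) ∧
    (∀ x ∈ sysZero 𝓡, ∀ y ∈ 𝓡 s, y * x ∈ 𝓡 s)

/-- The system is left non-degenerate. -/
def LeftNonDeg (𝓡 : S → AddSubgroup R) : Prop :=
  ∀ e : S, e * e = e → ∀ r ∈ 𝓡 e, r ≠ 0 →
    ∃ t : S, (t * e) * (t * e) = t * e ∧ ∃ x ∈ 𝓡 t, x * r ≠ 0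

/-- The system is right non-degenerate. -/
def RightNonDeg (𝓡 : S → AddSubgroup R) : Prop :=
  ∀ e : S, e * e = e → ∀ r ∈ 𝓡 e, r ≠ 0 →
    ∃ t : S, (e * t) * (e * t) = e * t ∧ ∃ x ∈ 𝓡 t, r * x ≠ 0

/-- `star` makes the semigroup `S` an inverse semigroup: `s (s*) s = s`,
`(s*) s (s*) = s*`, and `s*` is the unique such element. -/
def IsInverseStar (star : S → S) : Prop :=
  (∀ s : S, s * star s * s = s) ∧ (∀ s : S, star s * s * star s = star s) ∧
    ∀ s t : S, s * t * s = s → t * s * t = t → t = star s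

/-- Coherent: `s ≤ t` (i.e. `s = t s* s`) implies `R_s ⊆ R_t`. -/
def Coherent (star : S → S) (𝓡 : S → AddSubgroup R) : Prop :=
  ∀ s t : S, s = t * star s * s → 𝓡 s ≤ 𝓡 t

/-- Left s-unital epsilon-strong. -/
def LeftSEps (star : S → S) (𝓡 : S → AddSubgroup R) : Prop :=
  ∀ s : S, ∀ r ∈ 𝓡 s, ∃ ε ∈ sumProd (𝓡 s) (𝓡 (star s)), ε * r = r

/-- Right s-unital epsilon-strong. -/
def RightSEps (star : S → S) (𝓡 : S → AddSubgroup R) : Prop :=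
  ∀ s : S, ∀ r ∈ 𝓡 s, ∃ ε ∈ sumProd (𝓡 (star s)) (𝓡 s), r * ε = r

/-- Symmetric: `R_s R_{s*} R_s = R_s` for all `s`. -/
def IsSymmetricSys (star : S → S) (𝓡 : S → AddSubgroup R) : Prop :=
  ∀ s : S, sumProd (sumProd (𝓡 s) (𝓡 (star s))) (𝓡 s) = 𝓡 s

/-- The ring extension `R / C_R(Z(R₀))` has the ideal intersection property. -/
def IIPCentCenterZero (𝓡 : S → AddSubgroup R) : Prop :=
  ∀ I : AddSubgroup R, IsRingIdeal I → I ≠ ⊥ →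
    ∃ x : R, x ≠ 0 ∧ x ∈ I ∧ x ∈ centCenterZero 𝓡

/-- `R₀` is a maximal commutative subring of `R`: `C_R(R₀) = R₀`. -/
def MaxCommZero (𝓡 : S → AddSubgroup R) : Prop :=
  {x : R | ∀ y ∈ sysZero 𝓡, x * y = y * x} = (sysZero 𝓡 : Set R)


section Aux

variable {star : S → S} {𝓡 : S → AddSubgroup R}

theorem star_star (h : IsInverseStar star) (s : S) : star (star s) = s :=
  (h.2.2 (star s) s (h.2.1 s) (h.1 s)).symm

theorem star_idem (h : IsInverseStar star) {e : S} (he : e * e = e) : star e = e :=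
  (h.2.2 e e (by rw [he, he]) (by rw [he, he])).symm

theorem mul_star_self_idem (h : IsInverseStar star) (s : S) :
    (s * star s) * (s * star s) = s * star s := by
  rw [mul_assoc, ← mul_assoc (star s), h.2.1 s]

theorem star_mul_self_idem (h : IsInverseStar star) (s : S) :
    (star s * s) * (star s * s) = star s * s := by
  rw [mul_assoc, ← mul_assoc s, h.1 s]

/-- product of idempotents is idempotent and equals its own star -/
theorem idem_mul (h : IsInverseStar star) {e f : S} (he : e * e = e) (hf : f * f = f) :
    (e * f) * (e * f) = e * f ∧ star (e * f) = e * f := by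
  have hx1 : (e * f) * star (e * f) * (e * f) = e * f := h.1 _
  have hx2 : star (e * f) * (e * f) * star (e * f) = star (e * f) := h.2.1 _
  have he' : ∀ a : S, a * e * e = a * e := fun a => by rw [mul_assoc, he]
  have hf' : ∀ a : S, a * f * f = a * f := fun a => by rw [mul_assoc, hf]
  simp only [← mul_assoc] at hx1 hx2
  have key : f * star (e * f) * e = star (e * f) := by
    refine h.2.2 (e * f) (f * star (e * f) * e) ?_ ?_
    · simp only [← mul_assoc]
      rw [hf', he', hx1]
    · simp only [← mul_assoc]
      rw [he', hf']
      have : f * star (e * f) * e * f * star (e * f) * e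
          = f * (star (e * f) * e * f * star (e * f)) * e := by simp only [← mul_assoc]
      rw [this, hx2]
  have hxidem : star (e * f) * star (e * f) = star (e * f) := by
    conv_lhs => rw [← key]
    have : f * star (e * f) * e * (f * star (e * f) * e)
        = f * (star (e * f) * e * f * star (e * f)) * e := by simp only [← mul_assoc]
    rw [this, hx2, key]
  have hef : e * f = star (e * f) := by
    conv_lhs => rw [← star_star h (e * f)]
    exact star_idem h hxidem
  refine ⟨?_, hef.symm⟩
  conv_lhs => rw [hef]
  rw [hxidem, ← hef]

theorem idem_comm (h : IsInverseStar star) {e f : S} (he : e * e = e) (hf : f * f = f) :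
    e * f = f * e := by
  have hef := idem_mul h he hf
  have hfe := idem_mul h hf he
  have he' : ∀ a : S, a * e * e = a * e := fun a => by rw [mul_assoc, he]
  have hf' : ∀ a : S, a * f * f = a * f := fun a => by rw [mul_assoc, hf]
  have h1 : (e * f) * (f * e) * (e * f) = e * f := by
    have h0 := hef.1
    simp only [← mul_assoc] at h0 ⊢
    rw [hf']
    have : e * f * e * e * f = e * f * (e * e) * f := by simp only [← mul_assoc]
    rw [this, he, h0]
  have h2 : (f * e) * (e * f) * (f * e) = f * e := by
    have h0 := hfe.1
    simp only [← mul_assoc] at h0 ⊢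
    rw [he']
    have : f * e * f * f * e = f * e * (f * f) * e := by simp only [← mul_assoc]
    rw [this, hf, h0]
  have h3 := h.2.2 (e * f) (f * e) h1 h2
  rw [h3, hef.2]

theorem star_mul (h : IsInverseStar star) (s t : S) : star (s * t) = star t * star s := by
  have hst : (s * t) * (star t * star s) * (s * t) = s * t := by
    have h1 : (s * t) * (star t * star s) * (s * t)
        = s * ((t * star t) * (star s * s)) * t := by simp only [mul_assoc]
    rw [h1, idem_comm h (mul_star_self_idem h t) (star_mul_self_idem h s)]
    have h2 : s * (star s * s * (t * star t)) * t
        = (s * star s * s) * (t * star t * t) := by simp only [mul_assoc]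
    rw [h2, h.1 s, h.1 t]
  have hts : (star t * star s) * (s * t) * (star t * star s) = star t * star s := by
    have h1 : (star t * star s) * (s * t) * (star t * star s)
        = star t * ((star s * s) * (t * star t)) * star s := by simp only [mul_assoc]
    rw [h1, idem_comm h (star_mul_self_idem h s) (mul_star_self_idem h t)]
    have h2 : star t * (t * star t * (star s * s)) * star s
        = (star t * t * star t) * (star s * s * star s) := by simp only [mul_assoc]
    rw [h2, h.2.1 t, h.2.1 s]
  exact (h.2.2 (s * t) (star t * star s) hst hts).symm

/-- `e*s ≤ s` in the natural partial order -/
theorem le_left (h : IsInverseStar star) {e : S} (he : e * e = e) (s : S) :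
    e * s = s * star (e * s) * (e * s) := by
  rw [star_mul h, star_idem h he]
  have h1 : s * (star s * e) * (e * s) = (s * star s) * (e * e) * s := by
    simp only [mul_assoc]
  rw [h1, he, idem_comm h (mul_star_self_idem h s) he]
  rw [mul_assoc e, h.1 s]

/-- `s*e ≤ s` in the natural partial order -/
theorem le_right (h : IsInverseStar star) {e : S} (he : e * e = e) (s : S) :
    s * e = s * star (s * e) * (s * e) := by
  rw [star_mul h, star_idem h he]
  have h1 : s * (e * star s) * (s * e) = s * ((e * (star s * s)) * e) := by
    simp only [mul_assoc]
  rw [h1, idem_comm h he (star_mul_self_idem h s)]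
  have h2 : s * ((star s * s * e) * e) = (s * star s * s) * (e * e) := by
    simp only [mul_assoc]
  rw [h2, he, h.1 s]

theorem sum_map_neg' (l : List R) : (l.map (fun a => -a)).sum = -l.sum := by
  induction l with
  | nil => simp
  | cons a l ih => simp [ih]; abel

theorem sum_map_mul_left (r : R) (l : List R) : (l.map (fun a => r * a)).sum = r * l.sum := by
  induction l with
  | nil => simp
  | cons a l ih => simp [ih, mul_add]

theorem sum_map_mul_right (r : R) (l : List R) : (l.map (fun a => a * r)).sum = l.sum * r := by
  induction l with
  | nil => simp
  | cons a l ih => simp [ih, add_mul]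

theorem sum_map_sub_mul_left (r : R) (l : List R) :
    (l.map (fun c => c - r * c)).sum = l.sum - r * l.sum := by
  induction l with
  | nil => simp
  | cons a l ih => simp [ih, mul_add]; abel

theorem sum_map_sub_mul_right (r : R) (l : List R) :
    (l.map (fun c => c - c * r)).sum = l.sum - l.sum * r := by
  induction l with
  | nil => simp
  | cons a l ih => simp [ih, add_mul]; abel

theorem sum_map_comm (z : R) (l : List R) :
    (l.map (fun c => c * z - z * c)).sum = l.sum * z - z * l.sum := by
  induction l with
  | nil => simp
  | cons a l ih => simp [ih, add_mul, mul_add]; abel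

theorem exists_list_of_mem_closure {T : Set R} (hT : ∀ a ∈ T, -a ∈ T) {x : R}
    (hx : x ∈ AddSubgroup.closure T) :
    ∃ l : List R, (∀ a ∈ l, a ∈ T) ∧ l.sum = x := by
  refine AddSubgroup.closure_induction ?_ ?_ ?_ ?_ hx
  · exact fun a ha => ⟨[a], by simp [ha]⟩
  · exact ⟨[], by simp⟩
  · rintro a b _ _ ⟨l1, h1, h1s⟩ ⟨l2, h2, h2s⟩
    refine ⟨l1 ++ l2, ?_, by simp [h1s, h2s]⟩
    intro c hc
    rcases List.mem_append.mp hc with h | h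
    exacts [h1 c h, h2 c h]
  · rintro a _ ⟨l, h1, h1s⟩
    refine ⟨l.map (fun a => -a), ?_, by rw [sum_map_neg', h1s]⟩
    intro c hc
    obtain ⟨d, hd, rfl⟩ := List.mem_map.mp hc
    exact hT d (h1 d hd)

theorem exists_hom_list (hsys : IsSystem 𝓡) (x : R) :
    ∃ l : List R, (∀ a ∈ l, ∃ s, a ∈ 𝓡 s) ∧ l.sum = x := by
  have hx : x ∈ ⨆ s, 𝓡 s := by rw [hsys.1]; exact AddSubgroup.mem_top x
  rw [AddSubgroup.iSup_eq_closure] at hx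
  have hT : ∀ a ∈ ⋃ s, ((𝓡 s : Set R)), -a ∈ ⋃ s, ((𝓡 s : Set R)) := by
    intro a ha
    obtain ⟨s, hs⟩ := Set.mem_iUnion.mp ha
    exact Set.mem_iUnion.mpr ⟨s, neg_mem hs⟩
  obtain ⟨l, h1, h2⟩ := exists_list_of_mem_closure hT hx
  exact ⟨l, fun a ha => Set.mem_iUnion.mp (h1 a ha), h2⟩

theorem sysZero_eq : sysZero 𝓡 = ⨆ e : {e : S // e * e = e}, 𝓡 e.1 := by
  rw [sysZero, iSup_subtype]
  rfl

theorem exists_homE_list {x : R} (hz : x ∈ sysZero 𝓡) :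
    ∃ l : List R, (∀ a ∈ l, ∃ e, e * e = e ∧ a ∈ 𝓡 e) ∧ l.sum = x := by
  rw [sysZero_eq, AddSubgroup.iSup_eq_closure] at hz
  have hT : ∀ a ∈ ⋃ e : {e : S // e * e = e}, ((𝓡 e.1 : Set R)),
      -a ∈ ⋃ e : {e : S // e * e = e}, ((𝓡 e.1 : Set R)) := by
    intro a ha
    obtain ⟨e, he⟩ := Set.mem_iUnion.mp ha
    exact Set.mem_iUnion.mpr ⟨e, neg_mem he⟩
  obtain ⟨l, h1, h2⟩ := exists_list_of_mem_closure hT hz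
  refine ⟨l, fun a ha => ?_, h2⟩
  obtain ⟨e, he⟩ := Set.mem_iUnion.mp (h1 a ha)
  exact ⟨e.1, e.2, he⟩

theorem R_le_sysZero {e : S} (he : e * e = e) : 𝓡 e ≤ sysZero 𝓡 :=
  le_iSup_of_le e (le_iSup_of_le he le_rfl)

theorem sumProd_le (hsys : IsSystem 𝓡) (s t : S) : sumProd (𝓡 s) (𝓡 t) ≤ 𝓡 (s * t) := by
  rw [sumProd, AddSubgroup.closure_le]
  rintro a ha
  obtain ⟨u, hu, v, hv, rfl⟩ := Set.mem_mul.mp ha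
  exact hsys.2 s t u hu v hv

theorem mulSet_neg {A B : AddSubgroup R} :
    ∀ a ∈ (A : Set R) * (B : Set R), -a ∈ (A : Set R) * (B : Set R) := by
  rintro a ha
  obtain ⟨u, hu, v, hv, rfl⟩ := Set.mem_mul.mp ha
  exact ⟨-u, neg_mem hu, v, hv, neg_mul u v⟩

theorem absorb (hstar : IsInverseStar star) (hsys : IsSystem 𝓡) (hcoh : Coherent star 𝓡)
    {z : R} (hz : z ∈ sysZero 𝓡) {s : S} {a : R} (ha : a ∈ 𝓡 s) :
    z * a ∈ 𝓡 s ∧ a * z ∈ 𝓡 s := by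
  let T : AddSubgroup R :=
    { carrier := {w : R | w * a ∈ 𝓡 s ∧ a * w ∈ 𝓡 s}
      add_mem' := fun hx hy => ⟨by rw [add_mul]; exact add_mem hx.1 hy.1,
        by rw [mul_add]; exact add_mem hx.2 hy.2⟩
      zero_mem' := ⟨by rw [zero_mul]; exact zero_mem _, by rw [mul_zero]; exact zero_mem _⟩
      neg_mem' := fun hx => ⟨by rw [neg_mul]; exact neg_mem hx.1,
        by rw [mul_neg]; exact neg_mem hx.2⟩ }
  have hle : sysZero 𝓡 ≤ T := by
    refine iSup_le fun e => iSup_le fun he => ?_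
    intro w hw
    exact ⟨hcoh (e * s) s (le_left hstar he s) (hsys.2 e s w hw a ha),
      hcoh (s * e) s (le_right hstar he s) (hsys.2 s e a ha w hw)⟩
  exact hle hz

end Aux


section Key

variable {star : S → S} {𝓡 : S → AddSubgroup R}

theorem key (hstar : IsInverseStar star) (hsys : IsSystem 𝓡) (hcoh : Coherent star 𝓡)
    (heps : LeftSEps star 𝓡 ∨ RightSEps star 𝓡)
    (hcent : centCenterZero 𝓡 ⊆ (sysZero 𝓡 : Set R))
    {I : AddSubgroup R} (hI : IsRingIdeal I) (hne : I ≠ ⊥) :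
    ∃ s : S, ∃ w : R, w ≠ 0 ∧ w ∈ I ∧ w ∈ 𝓡 s := by
  classical
  obtain ⟨x₀, hx₀I, hx₀⟩ : ∃ x ∈ I, x ≠ 0 := by
    by_contra hc
    push_neg at hc
    exact hne ((AddSubgroup.eq_bot_iff_forall I).mpr hc)
  have hPex : ∃ n, ∃ l : List R, l.length = n ∧ (∀ a ∈ l, ∃ s, a ∈ 𝓡 s) ∧
      l.sum ∈ I ∧ l.sum ≠ 0 := by
    obtain ⟨l, hl, hls⟩ := exists_hom_list hsys x₀
    exact ⟨l.length, l, rfl, hl, hls ▸ hx₀I, hls ▸ hx₀⟩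
  set N := Nat.find hPex with hNdef
  have hmin : ∀ m, m < N → ¬ (∃ l : List R, l.length = m ∧ (∀ a ∈ l, ∃ s, a ∈ 𝓡 s) ∧
      l.sum ∈ I ∧ l.sum ≠ 0) := fun m hm => Nat.find_min hPex hm
  obtain ⟨l, hlen, hhom, hlI, hlne⟩ := Nat.find_spec hPex
  cases l with
  | nil => exact absurd rfl hlne
  | cons a l' =>
  obtain ⟨s₁, ha⟩ := hhom a List.mem_cons_self
  have hN : N = l'.length + 1 := by simpa using hlen.symm
  have hxc : (a :: l').sum = a + l'.sum := List.sum_cons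
  -- Phase 1 : produce a nonzero element of I with a representation whose first
  -- term lies in some 𝓡 f with f idempotent, and with N-1 further homogeneous terms.
  have phase1 : ∃ (y : R) (f : S) (t1 : R) (tl : List R),
      y ∈ I ∧ y ≠ 0 ∧ f * f = f ∧ t1 ∈ 𝓡 f ∧ (∀ c ∈ tl, ∃ u, c ∈ 𝓡 u) ∧
      tl.length = l'.length ∧ t1 + tl.sum = y := by
    rcases heps with hL | hR
    · obtain ⟨ε, hεmem, hεa⟩ := hL s₁ a ha
      have hεe : ε ∈ 𝓡 (s₁ * star s₁) := sumProd_le hsys s₁ (star s₁) hεmem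
      have hεx : ε * (a :: l').sum ≠ 0 := by
        intro h0
        have h0' : a + ε * l'.sum = 0 := by
          rw [hxc, mul_add, hεa] at h0
          exact h0
        have h1 : ε * l'.sum = -a := by
          have := eq_neg_of_add_eq_zero_right h0'
          rw [← neg_eq_iff_eq_neg] at this ⊢
          rw [← this]
        refine hmin l'.length (by omega) ⟨l'.map (fun c => c - ε * c), by simp, ?_, ?_, ?_⟩
        · intro c hc
          obtain ⟨d, hd, rfl⟩ := List.mem_map.mp hc
          obtain ⟨u, hu⟩ := hhom d (List.mem_cons_of_mem _ hd)
          exact ⟨u, sub_mem hu (hcoh _ u (le_left hstar (mul_star_self_idem hstar s₁) u)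
            (hsys.2 _ u ε hεe d hu))⟩
        · rw [sum_map_sub_mul_left, h1]
          have : l'.sum - -a = (a :: l').sum := by rw [hxc]; abel
          rw [this]; exact hlI
        · rw [sum_map_sub_mul_left, h1]
          have : l'.sum - -a = (a :: l').sum := by rw [hxc]; abel
          rw [this]; exact hlne
      obtain ⟨Lε, hLεT, hLεsum⟩ := exists_list_of_mem_closure mulSet_neg hεmem
      have hex : ∃ p ∈ Lε, p * (a :: l').sum ≠ 0 := by
        by_contra hc
        push_neg at hc
        apply hεx
        rw [← hLεsum, ← sum_map_mul_right]
        exact List.sum_eq_zero (by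
          intro q hq
          obtain ⟨p, hp, rfl⟩ := List.mem_map.mp hq
          exact hc p hp)
      obtain ⟨p, hpL, hpx⟩ := hex
      obtain ⟨u, hu, v, hv, rfl⟩ := Set.mem_mul.mp (hLεT p hpL)
      have hvx : v * (a :: l').sum ≠ 0 := fun h => hpx (by rw [mul_assoc, h, mul_zero])
      refine ⟨v * (a :: l').sum, star s₁ * s₁, v * a, l'.map (fun c => v * c),
        (hI v _ hlI).1, hvx, star_mul_self_idem hstar s₁, hsys.2 _ _ v hv a ha, ?_, by simp, ?_⟩
      · intro c hc
        obtain ⟨d, hd, rfl⟩ := List.mem_map.mp hc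
        obtain ⟨u', hu'⟩ := hhom d (List.mem_cons_of_mem _ hd)
        exact ⟨star s₁ * u', hsys.2 _ _ v hv d hu'⟩
      · rw [sum_map_mul_left, ← mul_add, ← hxc]
    · obtain ⟨ε, hεmem, hεa⟩ := hR s₁ a ha
      have hεe : ε ∈ 𝓡 (star s₁ * s₁) := sumProd_le hsys (star s₁) s₁ hεmem
      have hεx : (a :: l').sum * ε ≠ 0 := by
        intro h0
        have h0' : a + l'.sum * ε = 0 := by
          rw [hxc, add_mul, hεa] at h0
          exact h0
        have h1 : l'.sum * ε = -a := by
          have := eq_neg_of_add_eq_zero_right h0'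
          rw [← neg_eq_iff_eq_neg] at this ⊢
          rw [← this]
        refine hmin l'.length (by omega) ⟨l'.map (fun c => c - c * ε), by simp, ?_, ?_, ?_⟩
        · intro c hc
          obtain ⟨d, hd, rfl⟩ := List.mem_map.mp hc
          obtain ⟨u, hu⟩ := hhom d (List.mem_cons_of_mem _ hd)
          exact ⟨u, sub_mem hu (hcoh _ u (le_right hstar (star_mul_self_idem hstar s₁) u)
            (hsys.2 u _ d hu ε hεe))⟩
        · rw [sum_map_sub_mul_right, h1]
          have : l'.sum - -a = (a :: l').sum := by rw [hxc]; abel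
          rw [this]; exact hlI
        · rw [sum_map_sub_mul_right, h1]
          have : l'.sum - -a = (a :: l').sum := by rw [hxc]; abel
          rw [this]; exact hlne
      obtain ⟨Lε, hLεT, hLεsum⟩ := exists_list_of_mem_closure mulSet_neg hεmem
      have hex : ∃ p ∈ Lε, (a :: l').sum * p ≠ 0 := by
        by_contra hc
        push_neg at hc
        apply hεx
        rw [← hLεsum, ← sum_map_mul_left]
        exact List.sum_eq_zero (by
          intro q hq
          obtain ⟨p, hp, rfl⟩ := List.mem_map.mp hq
          exact hc p hp)
      obtain ⟨p, hpL, hpx⟩ := hex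
      obtain ⟨u, hu, v, hv, rfl⟩ := Set.mem_mul.mp (hLεT p hpL)
      have hvx : (a :: l').sum * u ≠ 0 := fun h => hpx (by rw [← mul_assoc, h, zero_mul])
      refine ⟨(a :: l').sum * u, s₁ * star s₁, a * u, l'.map (fun c => c * u),
        (hI u _ hlI).2, hvx, mul_star_self_idem hstar s₁, hsys.2 _ _ a ha u hu, ?_, by simp, ?_⟩
      · intro c hc
        obtain ⟨d, hd, rfl⟩ := List.mem_map.mp hc
        obtain ⟨u', hu'⟩ := hhom d (List.mem_cons_of_mem _ hd)
        exact ⟨u' * star s₁, hsys.2 _ _ d hu' u hu⟩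
      · rw [sum_map_mul_right, ← add_mul, ← hxc]
  obtain ⟨y, f, t1, tl, hyI, hy0, hf, ht1, htl, htlen, hysum⟩ := phase1
  -- Phase 2 : y commutes with Z(R₀), hence lies in R₀ by the hypothesis `hcent`.
  have hcomm : ∀ z ∈ centerZero 𝓡, y * z = z * y := by
    rintro z ⟨hz0, hzc⟩
    have ht1z : t1 * z = z * t1 := (hzc t1 (R_le_sysZero hf ht1)).symm
    have hd : y * z - z * y = (tl.map (fun c => c * z - z * c)).sum := by
      rw [sum_map_comm, ← hysum]
      rw [add_mul, mul_add, ht1z]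
      abel
    have hdI : y * z - z * y ∈ I := sub_mem (hI z y hyI).2 (hI z y hyI).1
    have hd0 : y * z - z * y = 0 := by
      by_contra hd0
      refine hmin tl.length (by omega) ⟨tl.map (fun c => c * z - z * c), by simp, ?_, ?_, ?_⟩
      · intro c hc
        obtain ⟨d, hd', rfl⟩ := List.mem_map.mp hc
        obtain ⟨u, hu⟩ := htl d hd'
        exact ⟨u, sub_mem (absorb hstar hsys hcoh hz0 hu).2 (absorb hstar hsys hcoh hz0 hu).1⟩
      · rw [← hd]; exact hdI
      · rw [← hd]; exact hd0
    exact sub_eq_zero.mp hd0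
  have hyz : y ∈ sysZero 𝓡 := hcent hcomm
  -- Phase 3 : shrink y to a single idempotent component.
  have hQex : ∃ m, ∃ l2 : List R, l2.length = m ∧ (∀ a ∈ l2, ∃ e, e * e = e ∧ a ∈ 𝓡 e) ∧
      l2.sum = y := by
    obtain ⟨l2, h1, h2⟩ := exists_homE_list hyz
    exact ⟨l2.length, l2, rfl, h1, h2⟩
  have hQmin := fun m (hm : m < Nat.find hQex) => Nat.find_min hQex hm
  obtain ⟨l2, hl2len, hl2E, hl2sum⟩ := Nat.find_spec hQex
  cases l2 with
  | nil => exact absurd hl2sum.symm (by simpa using hy0)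
  | cons c rest =>
  obtain ⟨e₁, he₁, hc⟩ := hl2E c List.mem_cons_self
  have hM : Nat.find hQex = rest.length + 1 := by simpa using hl2len.symm
  have hyc : (c :: rest).sum = c + rest.sum := List.sum_cons
  rcases heps with hL | hR
  · obtain ⟨ε, hεm, hεc⟩ := hL e₁ c hc
    rw [star_idem hstar he₁] at hεm
    have hεe : ε ∈ 𝓡 e₁ := by
      have h2 := sumProd_le hsys e₁ e₁ hεm
      rwa [he₁] at h2
    have hεy0 : ε * y ≠ 0 := by
      intro h0
      have h0' : c + ε * rest.sum = 0 := by
        rw [← hl2sum, hyc, mul_add, hεc] at h0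
        exact h0
      have h1 : ε * rest.sum = -c := by
        have := eq_neg_of_add_eq_zero_right h0'
        rw [← neg_eq_iff_eq_neg] at this ⊢
        rw [← this]
      refine hQmin rest.length (by omega) ⟨rest.map (fun d => d - ε * d), by simp, ?_, ?_⟩
      · intro d' hd'
        obtain ⟨d, hd, rfl⟩ := List.mem_map.mp hd'
        obtain ⟨e, he, hde⟩ := hl2E d (List.mem_cons_of_mem _ hd)
        exact ⟨e, he, sub_mem hde (hcoh (e₁ * e) e (le_left hstar he₁ e)
          (hsys.2 e₁ e ε hεe d hde))⟩
      · rw [sum_map_sub_mul_left, h1, ← hl2sum, hyc]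
        abel
    refine ⟨e₁, ε * y, hεy0, (hI ε y hyI).1, ?_⟩
    have hey : ε * y = ε * c + ε * rest.sum := by rw [← mul_add, ← hyc, hl2sum]
    rw [hey]
    refine add_mem (by rw [hεc]; exact hc) ?_
    rw [← sum_map_mul_left]
    refine list_sum_mem ?_
    intro d' hd'
    obtain ⟨d, hd, rfl⟩ := List.mem_map.mp hd'
    obtain ⟨e, he, hde⟩ := hl2E d (List.mem_cons_of_mem _ hd)
    exact hcoh (e₁ * e) e₁ (le_right hstar he e₁) (hsys.2 e₁ e ε hεe d hde)
  · obtain ⟨ε, hεm, hεc⟩ := hR e₁ c hc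
    rw [star_idem hstar he₁] at hεm
    have hεe : ε ∈ 𝓡 e₁ := by
      have h2 := sumProd_le hsys e₁ e₁ hεm
      rwa [he₁] at h2
    have hεy0 : y * ε ≠ 0 := by
      intro h0
      have h0' : c + rest.sum * ε = 0 := by
        rw [← hl2sum, hyc, add_mul, hεc] at h0
        exact h0
      have h1 : rest.sum * ε = -c := by
        have := eq_neg_of_add_eq_zero_right h0'
        rw [← neg_eq_iff_eq_neg] at this ⊢
        rw [← this]
      refine hQmin rest.length (by omega) ⟨rest.map (fun d => d - d * ε), by simp, ?_, ?_⟩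
      · intro d' hd'
        obtain ⟨d, hd, rfl⟩ := List.mem_map.mp hd'
        obtain ⟨e, he, hde⟩ := hl2E d (List.mem_cons_of_mem _ hd)
        exact ⟨e, he, sub_mem hde (hcoh (e * e₁) e (le_right hstar he₁ e)
          (hsys.2 e e₁ d hde ε hεe))⟩
      · rw [sum_map_sub_mul_right, h1, ← hl2sum, hyc]
        abel
    refine ⟨e₁, y * ε, hεy0, (hI ε y hyI).2, ?_⟩
    have hey : y * ε = c * ε + rest.sum * ε := by rw [← add_mul, ← hyc, hl2sum]
    rw [hey]
    refine add_mem (by rw [hεc]; exact hc) ?_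
    rw [← sum_map_mul_right]
    refine list_sum_mem ?_
    intro d' hd'
    obtain ⟨d, hd, rfl⟩ := List.mem_map.mp hd'
    obtain ⟨e, he, hde⟩ := hl2E d (List.mem_cons_of_mem _ hd)
    exact hcoh (e * e₁) e₁ (le_left hstar he e₁) (hsys.2 e e₁ d hde ε hεe)

end Key


/-- If `S` is an inverse semigroup and `R` is a coherent, system simple,
left (or right) s-unital epsilon-strong system over `S` with `C_R(Z(R₀)) ⊆ R₀`,
then `R` is a simple ring. -/
theorem stmt0 {S R : Type*} [Semigroup S] [NonUnitalRing R]
    (star : S → S) (hstar : IsInverseStar star)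
    (𝓡 : S → AddSubgroup R) (hsys : IsSystem 𝓡)
    (hcoh : Coherent star 𝓡)
    (heps : LeftSEps star 𝓡 ∨ RightSEps star 𝓡)
    (hss : SystemSimple 𝓡)
    (hcent : centCenterZero 𝓡 ⊆ (sysZero 𝓡 : Set R)) :
    RingSimple R := by
  intro I hI
  by_cases hbot : I = ⊥
  · exact Or.inl hbot
  right
  obtain ⟨s₀, w, hw0, hwI, hws⟩ := key hstar hsys hcoh heps hcent hI hbot
  set J : AddSubgroup R := ⨆ s, (I ⊓ 𝓡 s) with hJ
  have hJI : J ≤ I := iSup_le fun s => inf_le_left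
  have main : ∀ x ∈ J, ∀ r : R, r * x ∈ J ∧ x * r ∈ J := by
    have step : ∀ (s : S) (x : R), x ∈ I → x ∈ 𝓡 s → ∀ r : R, r * x ∈ J ∧ x * r ∈ J := by
      intro s x hxI hxs r
      let B : AddSubgroup R :=
        { carrier := {r : R | r * x ∈ J ∧ x * r ∈ J}
          add_mem' := fun h1 h2 => ⟨by rw [add_mul]; exact add_mem h1.1 h2.1,
            by rw [mul_add]; exact add_mem h1.2 h2.2⟩
          zero_mem' := ⟨by rw [zero_mul]; exact zero_mem _, by rw [mul_zero]; exact zero_mem _⟩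
          neg_mem' := fun h1 => ⟨by rw [neg_mul]; exact neg_mem h1.1,
            by rw [mul_neg]; exact neg_mem h1.2⟩ }
      have hB : ∀ t : S, 𝓡 t ≤ B := by
        intro t r' hr'
        constructor
        · exact le_iSup (fun s => I ⊓ 𝓡 s) (t * s) ⟨(hI r' x hxI).1, hsys.2 t s r' hr' x hxs⟩
        · exact le_iSup (fun s => I ⊓ 𝓡 s) (s * t) ⟨(hI r' x hxI).2, hsys.2 s t x hxs r' hr'⟩
      have htop : (⊤ : AddSubgroup R) ≤ B := by rw [← hsys.1]; exact iSup_le hB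
      exact htop (AddSubgroup.mem_top r)
    intro x hx r
    let A : AddSubgroup R :=
      { carrier := {x : R | r * x ∈ J ∧ x * r ∈ J}
        add_mem' := fun h1 h2 => ⟨by rw [mul_add]; exact add_mem h1.1 h2.1,
          by rw [add_mul]; exact add_mem h1.2 h2.2⟩
        zero_mem' := ⟨by rw [mul_zero]; exact zero_mem _, by rw [zero_mul]; exact zero_mem _⟩
        neg_mem' := fun h1 => ⟨by rw [mul_neg]; exact neg_mem h1.1,
          by rw [neg_mul]; exact neg_mem h1.2⟩ }
    have hA : J ≤ A := iSup_le fun s => fun x' hx' => step s x' hx'.1 hx'.2 r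
    exact hA hx
  have hJideal : IsRingIdeal J := fun r x hx => main x hx r
  have hJsys : IsSystemIdeal 𝓡 J := by
    refine ⟨hJideal, le_antisymm ?_ (iSup_le fun s => inf_le_left)⟩
    refine iSup_le fun s => ?_
    exact le_trans (le_inf (le_iSup (fun s => I ⊓ 𝓡 s) s) inf_le_right)
      (le_iSup (fun s => J ⊓ 𝓡 s) s)
  rcases hss J hJsys with hJb | hJt
  · exfalso
    apply hw0
    have hwJ : w ∈ J := le_iSup (fun s => I ⊓ 𝓡 s) s₀ ⟨hwI, hws⟩
    rw [hJb] at hwJ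
    simpa using hwJ
  · exact le_antisymm le_top (hJt ▸ hJI)


end PaperSys
end

section
/- Let G be a groupoid and let R be a G-graded ring that is graded simple and whose grading is left (or right) non-degenerate. If ∩_{e∈G_0} C_R(Z(R_e)) ⊆ R_0, then R is a simple ring. -/
open Pointwise CategoryTheory

namespace PaperGrpd

/-- The set of morphisms `G₁` of a groupoid, bundled with their domain and codomain:
`⟨a, b, g⟩` is the morphism `g : a ⟶ b`, with `d(g) = a` and `c(g) = b`. -/
abbrev GMor (G : Type*) [Groupoid G] := Σ a b : G, a ⟶ b

variable {G : Type*} [Groupoid G] {R : Type*} [NonUnitalRing R]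

/-- The additive subgroup of finite sums of products `a * b` with `a ∈ A`, `b ∈ B`. -/
def sumProd (A B : AddSubgroup R) : AddSubgroup R :=
  AddSubgroup.closure ((A : Set R) * (B : Set R))

/-- `I` is a two-sided ideal of the (possibly non-unital) ring `R`. -/
def IsRingIdeal (I : AddSubgroup R) : Prop :=
  ∀ r : R, ∀ x ∈ I, r * x ∈ I ∧ x * r ∈ I

/-- `𝓡` is a grading of `R` by the groupoid `G`:
`R = ⊕_{g ∈ G₁} R_g`, with `R_g R_h ⊆ R_{gh}` for composable pairs and
`R_g R_h = {0}` for non-composable pairs. -/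
def IsGroupoidGrading (𝓡 : GMor G → AddSubgroup R) : Prop :=
  (⨆ m : GMor G, 𝓡 m) = (⊤ : AddSubgroup R) ∧
  (∀ m : GMor G, Disjoint (𝓡 m) (⨆ m' ∈ {m' : GMor G | m' ≠ m}, 𝓡 m')) ∧
  (∀ (a b c : G) (g : b ⟶ c) (h : a ⟶ b),
    ∀ x ∈ 𝓡 ⟨b, c, g⟩, ∀ y ∈ 𝓡 ⟨a, b, h⟩, x * y ∈ 𝓡 ⟨a, c, h ≫ g⟩) ∧
  (∀ m m' : GMor G, m.1 ≠ m'.2.1 → ∀ x ∈ 𝓡 m, ∀ y ∈ 𝓡 m', x * y = 0)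

/-- `R₀ = ⊕_{e ∈ G₀} R_e`. -/
def grZero (𝓡 : GMor G → AddSubgroup R) : AddSubgroup R :=
  ⨆ e : G, 𝓡 ⟨e, e, 𝟙 e⟩

/-- `∩_{e ∈ G₀} C_R(Z(R_e))` as a subset of `R`. -/
def capCent (𝓡 : GMor G → AddSubgroup R) : Set R :=
  {x : R | ∀ e : G, ∀ z : R,
    (z ∈ 𝓡 ⟨e, e, 𝟙 e⟩ ∧ ∀ y ∈ 𝓡 ⟨e, e, 𝟙 e⟩, z * y = y * z) → x * z = z * x}

/-- `R` is graded simple: `{0}` and `R` are the only graded ideals. -/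
def GradedSimple (𝓡 : GMor G → AddSubgroup R) : Prop :=
  ∀ I : AddSubgroup R, IsRingIdeal I → I = (⨆ m : GMor G, (I ⊓ 𝓡 m)) →
    I = ⊥ ∨ I = ⊤

/-- The grading is left non-degenerate. -/
def LeftNonDeg (𝓡 : GMor G → AddSubgroup R) : Prop :=
  ∀ (a b : G) (g : a ⟶ b), ∀ r ∈ 𝓡 ⟨a, b, g⟩, r ≠ 0 →
    ∃ x ∈ 𝓡 ⟨b, a, Groupoid.inv g⟩, x * r ≠ 0

/-- The grading is right non-degenerate. -/
def RightNonDeg (𝓡 : GMor G → AddSubgroup R) : Prop :=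
  ∀ (a b : G) (g : a ⟶ b), ∀ r ∈ 𝓡 ⟨a, b, g⟩, r ≠ 0 →
    ∃ x ∈ 𝓡 ⟨b, a, Groupoid.inv g⟩, r * x ≠ 0

/-- `R` is a simple ring: `{0}` and `R` are the only two-sided ideals. -/
def RingSimple (R' : Type*) [NonUnitalRing R'] : Prop :=
  ∀ I : AddSubgroup R', IsRingIdeal I → I = ⊥ ∨ I = ⊤


-- ==== AUX ====

/-- A representation of `x` as a finite sum of homogeneous elements, with an
injective grade map `σ` on the index set `F`. -/
def Rep (𝓡 : GMor G → AddSubgroup R) (F : Finset (GMor G)) (σ : GMor G → GMor G)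
    (y : GMor G → R) (x : R) : Prop :=
  Set.InjOn σ F ∧ (∀ m ∈ F, y m ∈ 𝓡 (σ m)) ∧ x = ∑ m ∈ F, y m

lemma rep_unique {𝓡 : GMor G → AddSubgroup R} (hgr : IsGroupoidGrading 𝓡)
    {F : Finset (GMor G)} {σ y} (h : Rep 𝓡 F σ y (0 : R)) :
    ∀ m ∈ F, y m = 0 := by
  classical
  obtain ⟨hinj, hmem, hsum⟩ := h
  intro m hm
  have hsum' : y m + ∑ m' ∈ F.erase m, y m' = 0 := by
    rw [Finset.add_sum_erase F y hm]; exact hsum.symm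
  have h2 : (∑ m' ∈ F.erase m, y m') ∈ ⨆ m'' ∈ {m'' : GMor G | m'' ≠ σ m}, 𝓡 m'' := by
    refine AddSubgroup.sum_mem _ fun m' hm' => ?_
    have hne : σ m' ≠ σ m := fun he =>
      (Finset.ne_of_mem_erase hm') (hinj (Finset.mem_of_mem_erase hm') hm he)
    exact le_iSup₂ (f := fun (m'' : GMor G) (_ : m'' ∈ {m'' : GMor G | m'' ≠ σ m}) => 𝓡 m'')
      (σ m') hne (hmem m' (Finset.mem_of_mem_erase hm'))
  have h1 : y m = -∑ m' ∈ F.erase m, y m' := eq_neg_of_add_eq_zero_left hsum'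
  have : y m ∈ 𝓡 (σ m) ⊓ ⨆ m'' ∈ {m'' : GMor G | m'' ≠ σ m}, 𝓡 m'' :=
    ⟨hmem m hm, h1 ▸ AddSubgroup.neg_mem _ h2⟩
  simpa using (hgr.2.1 (σ m)).le_bot this


lemma exists_rep {𝓡 : GMor G → AddSubgroup R} (hgr : IsGroupoidGrading 𝓡) (x : R) :
    ∃ (F : Finset (GMor G)) (y : GMor G → R), Rep 𝓡 F id y x := by
  classical
  have hx : x ∈ ⨆ m : GMor G, 𝓡 m := by rw [hgr.1]; exact AddSubgroup.mem_top x
  have key : ∃ (F : Finset (GMor G)) (y : GMor G → R),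
      (∀ m ∈ F, y m ∈ 𝓡 m) ∧ x = ∑ m ∈ F, y m := by
    refine AddSubgroup.iSup_induction (C := fun x => ∃ (F : Finset (GMor G)) (y : GMor G → R),
      (∀ m ∈ F, y m ∈ 𝓡 m) ∧ x = ∑ m ∈ F, y m) 𝓡 hx ?_ ?_ ?_
    · intro m r hr
      exact ⟨{m}, fun _ => r, fun m' hm' => by rwa [Finset.mem_singleton.mp hm'], by simp⟩
    · exact ⟨∅, fun _ => 0, fun m hm => by simp at hm, by simp⟩
    · rintro u v ⟨F₁, y₁, hy₁, hs₁⟩ ⟨F₂, y₂, hy₂, hs₂⟩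
      refine ⟨F₁ ∪ F₂, fun m => (if m ∈ F₁ then y₁ m else 0) + (if m ∈ F₂ then y₂ m else 0),
        fun m hm => ?_, ?_⟩
      · refine AddSubgroup.add_mem _ ?_ ?_
        · by_cases h : m ∈ F₁
          · simpa [h] using hy₁ m h
          · simp only [h, if_false]; simpa using zero_mem _
        · by_cases h : m ∈ F₂
          · simpa [h] using hy₂ m h
          · simp only [h, if_false]; simpa using zero_mem _
      · rw [Finset.sum_add_distrib, Finset.sum_ite_mem, Finset.sum_ite_mem,
          Finset.union_inter_cancel_left, Finset.union_inter_cancel_right, hs₁, hs₂]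
  obtain ⟨F, y, h1, h2⟩ := key
  exact ⟨F, y, Function.injective_id.injOn, h1, h2⟩

open Classical in
/-- right-composition reindexing map on homogeneous degrees -/
noncomputable def phiL {G : Type*} [Groupoid G] {p q : G} (u : p ⟶ q) : GMor G → GMor G := fun m =>
  if h : m.2.1 = p then ⟨m.1, q, (m.2.2 ≫ eqToHom h) ≫ u⟩ else m

lemma phiL_eq {p q : G} (u : p ⟶ q) (a₁ b₁ : G) (h₁ : a₁ ⟶ b₁) (hb : b₁ = p) :
    phiL u ⟨a₁, b₁, h₁⟩ = ⟨a₁, q, (h₁ ≫ eqToHom hb) ≫ u⟩ := by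
  unfold phiL; rw [dif_pos hb]

lemma phiL_inv {p q : G} (u : p ⟶ q) (m : GMor G) (hm : m.2.1 = p) :
    phiL (Groupoid.inv u) (phiL u m) = m := by
  obtain ⟨a₁, b₁, h₁⟩ := m
  have hb : b₁ = p := hm
  subst hb
  rw [phiL_eq u a₁ b₁ h₁ rfl, phiL_eq (Groupoid.inv u) a₁ q _ rfl]
  simp [Category.assoc, Groupoid.comp_inv]

lemma phiL_injOn {p q : G} (u : p ⟶ q) :
    Set.InjOn (phiL u) {m : GMor G | m.2.1 = p} := fun m₁ h₁ m₂ h₂ he => by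
  rw [← phiL_inv u m₁ h₁, ← phiL_inv u m₂ h₂, he]

open Classical in
/-- left-composition reindexing map on homogeneous degrees -/
noncomputable def phiR {G : Type*} [Groupoid G] {p q : G} (u : p ⟶ q) : GMor G → GMor G := fun m =>
  if h : m.1 = q then ⟨p, m.2.1, u ≫ (eqToHom h.symm ≫ m.2.2)⟩ else m

lemma phiR_eq {p q : G} (u : p ⟶ q) (a₁ b₁ : G) (h₁ : a₁ ⟶ b₁) (ha : a₁ = q) :
    phiR u ⟨a₁, b₁, h₁⟩ = ⟨p, b₁, u ≫ (eqToHom ha.symm ≫ h₁)⟩ := by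
  unfold phiR; rw [dif_pos ha]

lemma phiR_inv {p q : G} (u : p ⟶ q) (m : GMor G) (hm : m.1 = q) :
    phiR (Groupoid.inv u) (phiR u m) = m := by
  obtain ⟨a₁, b₁, h₁⟩ := m
  have ha : a₁ = q := hm
  subst ha
  rw [phiR_eq u a₁ b₁ h₁ rfl, phiR_eq (Groupoid.inv u) p b₁ _ rfl]
  simp [← Category.assoc, Groupoid.inv_comp]

lemma phiR_injOn {p q : G} (u : p ⟶ q) :
    Set.InjOn (phiR u) {m : GMor G | m.1 = q} := fun m₁ h₁ m₂ h₂ he => by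
  rw [← phiR_inv u m₁ h₁, ← phiR_inv u m₂ h₂, he]


lemma rep_mul_left {𝓡 : GMor G → AddSubgroup R} (hgr : IsGroupoidGrading 𝓡)
    {F : Finset (GMor G)} {σ y} {x : R} (hrep : Rep 𝓡 F σ y x)
    {p q : G} {u : p ⟶ q} {s : R} (hs : s ∈ 𝓡 ⟨p, q, u⟩) :
    ∃ (F' : Finset (GMor G)), Rep 𝓡 F' (phiL u ∘ σ) (fun m' => s * y m') (s * x) ∧
      F'.card ≤ F.card ∧ (∀ m ∈ F, (σ m).2.1 = p → m ∈ F') ∧ F' ⊆ F := by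
  classical
  obtain ⟨hinj, hmem, hsum⟩ := hrep
  refine ⟨F.filter (fun m' => (σ m').2.1 = p), ⟨?_, ?_, ?_⟩, Finset.card_filter_le _ _,
    fun m hm hp => Finset.mem_filter.mpr ⟨hm, hp⟩, Finset.filter_subset _ _⟩
  · intro m₁ h₁ m₂ h₂ he
    have h₁' := Finset.mem_filter.mp h₁
    have h₂' := Finset.mem_filter.mp h₂
    exact hinj h₁'.1 h₂'.1 (phiL_injOn u h₁'.2 h₂'.2 he)
  · intro m' hm'
    obtain ⟨hmF, hb⟩ := Finset.mem_filter.mp hm'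
    have hy' := hmem m' hmF
    rcases hq : σ m' with ⟨a₁, b₁, h₁⟩
    rw [hq] at hy' hb
    have hb' : b₁ = p := hb
    subst hb'
    have : phiL u ⟨a₁, b₁, h₁⟩ = ⟨a₁, q, h₁ ≫ u⟩ := by
      rw [phiL_eq u a₁ b₁ h₁ rfl]; simp
    simp only [Function.comp_apply, hq, this]
    exact hgr.2.2.1 a₁ b₁ q u h₁ s hs (y m') hy'
  · rw [hsum, Finset.mul_sum]
    refine (Finset.sum_filter_of_ne fun m' hm' hne => ?_).symm
    by_contra hb
    exact hne (hgr.2.2.2 ⟨p, q, u⟩ (σ m') (fun he => hb he.symm) s hs (y m') (hmem m' hm'))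

lemma rep_mul_right {𝓡 : GMor G → AddSubgroup R} (hgr : IsGroupoidGrading 𝓡)
    {F : Finset (GMor G)} {σ y} {x : R} (hrep : Rep 𝓡 F σ y x)
    {p q : G} {u : p ⟶ q} {s : R} (hs : s ∈ 𝓡 ⟨p, q, u⟩) :
    ∃ (F' : Finset (GMor G)), Rep 𝓡 F' (phiR u ∘ σ) (fun m' => y m' * s) (x * s) ∧
      F'.card ≤ F.card ∧ (∀ m ∈ F, (σ m).1 = q → m ∈ F') ∧ F' ⊆ F := by
  classical
  obtain ⟨hinj, hmem, hsum⟩ := hrep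
  refine ⟨F.filter (fun m' => (σ m').1 = q), ⟨?_, ?_, ?_⟩, Finset.card_filter_le _ _,
    fun m hm hp => Finset.mem_filter.mpr ⟨hm, hp⟩, Finset.filter_subset _ _⟩
  · intro m₁ h₁ m₂ h₂ he
    have h₁' := Finset.mem_filter.mp h₁
    have h₂' := Finset.mem_filter.mp h₂
    exact hinj h₁'.1 h₂'.1 (phiR_injOn u h₁'.2 h₂'.2 he)
  · intro m' hm'
    obtain ⟨hmF, ha⟩ := Finset.mem_filter.mp hm'
    have hy' := hmem m' hmF
    rcases hq : σ m' with ⟨a₁, b₁, h₁⟩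
    rw [hq] at hy' ha
    have ha' : a₁ = q := ha
    subst ha'
    have : phiR u ⟨a₁, b₁, h₁⟩ = ⟨p, b₁, u ≫ h₁⟩ := by
      rw [phiR_eq u a₁ b₁ h₁ rfl]; simp
    simp only [Function.comp_apply, hq, this]
    exact hgr.2.2.1 p a₁ b₁ h₁ u (y m') hy' s hs
  · rw [hsum, Finset.sum_mul]
    refine (Finset.sum_filter_of_ne fun m' hm' hne => ?_).symm
    by_contra ha
    exact hne (hgr.2.2.2 (σ m') ⟨p, q, u⟩ (fun he => ha he) (y m') (hmem m' hm') s hs)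

lemma rep_mul_left_id {𝓡 : GMor G → AddSubgroup R} (hgr : IsGroupoidGrading 𝓡)
    {F : Finset (GMor G)} {σ y} {x : R} (hrep : Rep 𝓡 F σ y x)
    {a : G} {t : R} (ht : t ∈ 𝓡 ⟨a, a, 𝟙 a⟩) :
    Rep 𝓡 F σ (fun m' => t * y m') (t * x) := by
  obtain ⟨hinj, hmem, hsum⟩ := hrep
  refine ⟨hinj, ?_, by rw [hsum, Finset.mul_sum]⟩
  intro m' hm'
  have hy' := hmem m' hm'
  rcases hq : σ m' with ⟨a₁, b₁, h₁⟩
  rw [hq] at hy'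
  by_cases hb : b₁ = a
  · subst hb
    have := hgr.2.2.1 a₁ b₁ b₁ (𝟙 b₁) h₁ t ht (y m') hy'
    simpa using this
  · dsimp only
    rw [hgr.2.2.2 ⟨a, a, 𝟙 a⟩ ⟨a₁, b₁, h₁⟩ (fun he => hb he.symm) t ht (y m') hy']
    exact zero_mem _

lemma rep_mul_right_id {𝓡 : GMor G → AddSubgroup R} (hgr : IsGroupoidGrading 𝓡)
    {F : Finset (GMor G)} {σ y} {x : R} (hrep : Rep 𝓡 F σ y x)
    {a : G} {t : R} (ht : t ∈ 𝓡 ⟨a, a, 𝟙 a⟩) :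
    Rep 𝓡 F σ (fun m' => y m' * t) (x * t) := by
  obtain ⟨hinj, hmem, hsum⟩ := hrep
  refine ⟨hinj, ?_, by rw [hsum, Finset.sum_mul]⟩
  intro m' hm'
  have hy' := hmem m' hm'
  rcases hq : σ m' with ⟨a₁, b₁, h₁⟩
  rw [hq] at hy'
  by_cases hb : a₁ = a
  · subst hb
    have := hgr.2.2.1 a₁ a₁ b₁ h₁ (𝟙 a₁) (y m') hy' t ht
    simpa using this
  · dsimp only
    rw [hgr.2.2.2 ⟨a₁, b₁, h₁⟩ ⟨a, a, 𝟙 a⟩ (fun he => hb he) (y m') hy' t ht]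
    exact zero_mem _

lemma homog_left {𝓡 : GMor G → AddSubgroup R} (hgr : IsGroupoidGrading 𝓡)
    {x : R} (hx0 : x ∈ grZero 𝓡) {a : G} {t : R} (ht : t ∈ 𝓡 ⟨a, a, 𝟙 a⟩) :
    t * x ∈ 𝓡 ⟨a, a, 𝟙 a⟩ := by
  have hle : grZero 𝓡 ≤ (𝓡 ⟨a, a, 𝟙 a⟩).comap (AddMonoidHom.mulLeft t) := by
    refine iSup_le fun e => fun w hw => ?_
    simp only [AddSubgroup.mem_comap, AddMonoidHom.coe_mulLeft]
    by_cases he : e = a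
    · subst he
      have := hgr.2.2.1 e e e (𝟙 e) (𝟙 e) t ht w hw
      simpa using this
    · rw [hgr.2.2.2 ⟨a, a, 𝟙 a⟩ ⟨e, e, 𝟙 e⟩ (fun h2 => he h2.symm) t ht w hw]
      exact zero_mem _
  exact hle hx0

lemma homog_right {𝓡 : GMor G → AddSubgroup R} (hgr : IsGroupoidGrading 𝓡)
    {x : R} (hx0 : x ∈ grZero 𝓡) {a : G} {t : R} (ht : t ∈ 𝓡 ⟨a, a, 𝟙 a⟩) :
    x * t ∈ 𝓡 ⟨a, a, 𝟙 a⟩ := by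
  have hle : grZero 𝓡 ≤ (𝓡 ⟨a, a, 𝟙 a⟩).comap (AddMonoidHom.mulRight t) := by
    refine iSup_le fun e => fun w hw => ?_
    simp only [AddSubgroup.mem_comap, AddMonoidHom.coe_mulRight]
    by_cases he : e = a
    · subst he
      have := hgr.2.2.1 e e e (𝟙 e) (𝟙 e) w hw t ht
      simpa using this
    · rw [hgr.2.2.2 ⟨e, e, 𝟙 e⟩ ⟨a, a, 𝟙 a⟩ he w hw t ht]
      exact zero_mem _
  exact hle hx0


lemma witness_grZero {𝓡 : GMor G → AddSubgroup R} (hgr : IsGroupoidGrading 𝓡)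
    (hcent : capCent 𝓡 ⊆ (grZero 𝓡 : Set R)) {I : AddSubgroup R} (hI : IsRingIdeal I)
    {n : ℕ}
    (hmin : ∀ (z : R) (F' : Finset (GMor G)) σ' y', z ∈ I → z ≠ 0 → Rep 𝓡 F' σ' y' z →
      n ≤ F'.card)
    {x : R} {F : Finset (GMor G)} {σ y} (hx : x ∈ I) (hrep : Rep 𝓡 F σ y x)
    (hcard : F.card ≤ n) {m : GMor G} {a : G} (hmF : m ∈ F) (hσ : σ m = ⟨a, a, 𝟙 a⟩) :
    x ∈ grZero 𝓡 := by
  classical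
  apply hcent
  rintro e z ⟨hz, hzc⟩
  by_contra hne
  obtain ⟨hinj, hmem, hsum⟩ := hrep
  -- each commutator term is homogeneous of the same degree
  have hterm : ∀ m' ∈ F, y m' * z - z * y m' ∈ 𝓡 (σ m') := by
    intro m' hm'
    have hy' := hmem m' hm'
    rcases hq : σ m' with ⟨a₁, b₁, h₁⟩
    rw [hq] at hy'
    refine sub_mem ?_ ?_
    · by_cases ha : a₁ = e
      · subst ha
        have := hgr.2.2.1 a₁ a₁ b₁ h₁ (𝟙 a₁) (y m') hy' z hz
        simpa using this
      · rw [hgr.2.2.2 ⟨a₁, b₁, h₁⟩ ⟨e, e, 𝟙 e⟩ (fun he => ha he) (y m') hy' z hz]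
        exact zero_mem _
    · by_cases hb : b₁ = e
      · subst hb
        have := hgr.2.2.1 a₁ b₁ b₁ (𝟙 b₁) h₁ z hz (y m') hy'
        simpa using this
      · rw [hgr.2.2.2 ⟨e, e, 𝟙 e⟩ ⟨a₁, b₁, h₁⟩ (fun he => hb he.symm) z hz (y m') hy']
        exact zero_mem _
  -- the term at m vanishes
  have hm0 : y m * z - z * y m = 0 := by
    have hym : y m ∈ 𝓡 ⟨a, a, 𝟙 a⟩ := hσ ▸ hmem m hmF
    by_cases he : e = a
    · subst he
      rw [hzc (y m) hym]
      exact sub_self _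
    · rw [hgr.2.2.2 ⟨a, a, 𝟙 a⟩ ⟨e, e, 𝟙 e⟩ (fun h2 => he h2.symm) (y m) hym z hz,
        hgr.2.2.2 ⟨e, e, 𝟙 e⟩ ⟨a, a, 𝟙 a⟩ (fun h2 => he h2) z hz (y m) hym]
      exact sub_self _
  -- representation of the commutator over `F.erase m`
  have hrepw : Rep 𝓡 (F.erase m) σ (fun m' => y m' * z - z * y m') (x * z - z * x) := by
    refine ⟨hinj.mono (by exact_mod_cast Finset.erase_subset m F), fun m' hm' =>
      hterm m' (Finset.mem_of_mem_erase hm'), ?_⟩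
    dsimp only
    rw [hsum, Finset.sum_mul, Finset.mul_sum, ← Finset.sum_sub_distrib]
    exact (Finset.sum_erase (f := fun m' => y m' * z - z * y m') F hm0).symm
  have hwI : x * z - z * x ∈ I := sub_mem (hI z x hx).2 (hI z x hx).1
  have hwne : x * z - z * x ≠ 0 := sub_ne_zero.mpr hne
  have h1 := hmin _ _ _ _ hwI hwne hrepw
  have h2 : (F.erase m).card < F.card := Finset.card_erase_lt_of_mem hmF
  omega

lemma ideal_top {𝓡 : GMor G → AddSubgroup R} (hgr : IsGroupoidGrading 𝓡)
    (hgs : GradedSimple 𝓡) {I : AddSubgroup R} (hI : IsRingIdeal I)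
    {m₀ : GMor G} {v : R} (hvI : v ∈ I) (hvm : v ∈ 𝓡 m₀) (hv : v ≠ 0) : I = ⊤ := by
  classical
  set J : AddSubgroup R := ⨆ m : GMor G, (I ⊓ 𝓡 m) with hJ
  -- J is an ideal
  have hprod : ∀ (m m' : GMor G) (r w : R), r ∈ 𝓡 m' → w ∈ I → w ∈ 𝓡 m →
      r * w ∈ J ∧ w * r ∈ J := by
    intro m m' r w hr hwI hwm
    constructor
    · rcases hq' : m' with ⟨a', b', g'⟩
      rcases hq : m with ⟨a, b, g⟩
      rw [hq'] at hr; rw [hq] at hwm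
      by_cases hc : a' = b
      · subst hc
        have h3 : r * w ∈ 𝓡 ⟨a, b', g ≫ g'⟩ := hgr.2.2.1 a a' b' g' g r hr w hwm
        have h4 : r * w ∈ I := (hI r w hwI).1
        exact le_iSup (fun m => I ⊓ 𝓡 m) ⟨a, b', g ≫ g'⟩ ⟨h4, h3⟩
      · rw [hgr.2.2.2 ⟨a', b', g'⟩ ⟨a, b, g⟩ (fun he => hc he) r hr w hwm]
        exact zero_mem _
    · rcases hq' : m' with ⟨a', b', g'⟩
      rcases hq : m with ⟨a, b, g⟩
      rw [hq'] at hr; rw [hq] at hwm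
      by_cases hc : a = b'
      · subst hc
        have h3 : w * r ∈ 𝓡 ⟨a', b, g' ≫ g⟩ := hgr.2.2.1 a' a b g g' w hwm r hr
        have h4 : w * r ∈ I := (hI r w hwI).2
        exact le_iSup (fun m => I ⊓ 𝓡 m) ⟨a', b, g' ≫ g⟩ ⟨h4, h3⟩
      · rw [hgr.2.2.2 ⟨a, b, g⟩ ⟨a', b', g'⟩ (fun he => hc he) w hwm r hr]
        exact zero_mem _
  have hJideal : IsRingIdeal J := by
    intro r v' hv'
    have : v' ∈ {v' : R | r * v' ∈ J ∧ v' * r ∈ J} := by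
      have hKsub : J ≤ {
          carrier := {v' : R | r * v' ∈ J ∧ v' * r ∈ J}
          zero_mem' := ⟨by rw [mul_zero]; exact zero_mem _, by rw [zero_mul]; exact zero_mem _⟩
          add_mem' := fun h1 h2 => ⟨by rw [mul_add]; exact add_mem h1.1 h2.1,
            by rw [add_mul]; exact add_mem h1.2 h2.2⟩
          neg_mem' := fun h => ⟨by rw [mul_neg]; exact neg_mem h.1,
            by rw [neg_mul]; exact neg_mem h.2⟩ } := by
        refine iSup_le fun m => fun w hw => ?_
        obtain ⟨hwI, hwm⟩ := hw
        -- now decompose r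
        have hLsub : (⊤ : AddSubgroup R) ≤ {
            carrier := {r : R | r * w ∈ J ∧ w * r ∈ J}
            zero_mem' := ⟨by rw [zero_mul]; exact zero_mem _, by rw [mul_zero]; exact zero_mem _⟩
            add_mem' := fun h1 h2 => ⟨by rw [add_mul]; exact add_mem h1.1 h2.1,
              by rw [mul_add]; exact add_mem h1.2 h2.2⟩
            neg_mem' := fun h => ⟨by rw [neg_mul]; exact neg_mem h.1,
              by rw [mul_neg]; exact neg_mem h.2⟩ } := by
          rw [← hgr.1]
          refine iSup_le fun m' => fun r' hr' => ?_
          exact hprod m m' r' w hr' hwI hwm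
        exact hLsub (AddSubgroup.mem_top r)
      exact hKsub hv'
    exact this
  have hJgraded : J = ⨆ m : GMor G, (J ⊓ 𝓡 m) := by
    refine le_antisymm ?_ (iSup_le fun m => inf_le_left)
    refine iSup_le fun m => ?_
    exact le_iSup_of_le m (le_inf (le_iSup (fun m => I ⊓ 𝓡 m) m) inf_le_right)
  rcases hgs J hJideal hJgraded with h | h
  · exfalso
    have : v ∈ J := le_iSup (fun m => I ⊓ 𝓡 m) m₀ ⟨hvI, hvm⟩
    rw [h] at this
    exact hv (AddSubgroup.mem_bot.mp this)
  · have hJI : J ≤ I := iSup_le fun m => inf_le_left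
    rw [h] at hJI
    exact le_antisymm le_top hJI



/-- Let `G` be a groupoid and `R` a `G`-graded ring that is graded
simple and whose grading is left (or right) non-degenerate. If
`∩_{e ∈ G₀} C_R(Z(R_e)) ⊆ R₀`, then `R` is a simple ring. -/
theorem stmt2 {G : Type*} [Groupoid G] {R : Type*} [NonUnitalRing R]
    (𝓡 : GMor G → AddSubgroup R) (hgr : IsGroupoidGrading 𝓡)
    (hgs : GradedSimple 𝓡)
    (hnd : LeftNonDeg 𝓡 ∨ RightNonDeg 𝓡)
    (hcent : capCent 𝓡 ⊆ (grZero 𝓡 : Set R)) :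
    RingSimple R := by
  classical
  intro I hI
  by_cases hbot : I = ⊥
  · exact Or.inl hbot
  right
  obtain ⟨x₀, hx₀I, hx₀ne⟩ : ∃ x₀ ∈ I, x₀ ≠ 0 := by
    by_contra h
    push_neg at h
    exact hbot ((AddSubgroup.eq_bot_iff_forall I).mpr h)
  set S : Set ℕ := {k | ∃ x, x ∈ I ∧ x ≠ 0 ∧ ∃ (F : Finset (GMor G))
    (σ : GMor G → GMor G) (y : GMor G → R), Rep 𝓡 F σ y x ∧ F.card = k} with hS
  have hSne : S.Nonempty := by
    obtain ⟨F, y, hrep⟩ := exists_rep hgr x₀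
    exact ⟨F.card, x₀, hx₀I, hx₀ne, F, id, y, hrep, rfl⟩
  set n := sInf S with hn
  have hmin : ∀ (z : R) (F' : Finset (GMor G)) σ' y', z ∈ I → z ≠ 0 → Rep 𝓡 F' σ' y' z →
      n ≤ F'.card := fun z F' σ' y' hz hzne hrep' =>
    Nat.sInf_le ⟨z, hz, hzne, F', σ', y', hrep', rfl⟩
  obtain ⟨x, hxI, hxne, F, σ, y, hrep, hcard⟩ := Nat.sInf_mem hSne
  have hFne : F.Nonempty := by
    rcases F.eq_empty_or_nonempty with h | h
    · exfalso; apply hxne; rw [hrep.2.2, h, Finset.sum_empty]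
    · exact h
  obtain ⟨m, hmF⟩ := hFne
  have hym : y m ≠ 0 := by
    intro h0
    have hrep' : Rep 𝓡 (F.erase m) σ y x :=
      ⟨hrep.1.mono (by exact_mod_cast Finset.erase_subset m F),
       fun m' hm' => hrep.2.1 m' (Finset.mem_of_mem_erase hm'),
       by rw [hrep.2.2]; exact (Finset.sum_erase F h0).symm⟩
    have h1 := hmin x _ σ y hxI hxne hrep'
    have h2 : (F.erase m).card < F.card := Finset.card_erase_lt_of_mem hmF
    omega
  rcases hg : σ m with ⟨a, b, g⟩
  have hymem : y m ∈ 𝓡 ⟨a, b, g⟩ := hg ▸ hrep.2.1 m hmF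
  rcases hnd with hL | hR
  · obtain ⟨s, hs, hsy⟩ := hL a b g (y m) hymem hym
    obtain ⟨F', hrep', hcard', hmemF', _⟩ := rep_mul_left hgr hrep hs
    have hmF' : m ∈ F' := hmemF' m hmF (by rw [hg])
    have hx'I : s * x ∈ I := (hI s x hxI).1
    have hσ'm : (phiL (Groupoid.inv g) ∘ σ) m = ⟨a, a, 𝟙 a⟩ := by
      simp only [Function.comp_apply, hg]
      rw [phiL_eq (Groupoid.inv g) a b g rfl]
      simp [Groupoid.comp_inv]
    have hx'ne : s * x ≠ 0 := by
      intro h0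
      exact hsy (rep_unique hgr (h0 ▸ hrep') m hmF')
    have hx'0 : s * x ∈ grZero 𝓡 :=
      witness_grZero hgr hcent hI hmin hx'I hrep' (le_trans hcard' (le_of_eq hcard)) hmF' hσ'm
    have hy'mem : s * y m ∈ 𝓡 ⟨a, a, 𝟙 a⟩ := by
      have h3 := hrep'.2.1 m hmF'
      rwa [hσ'm] at h3
    obtain ⟨t, ht, hty⟩ := hL a a (𝟙 a) (s * y m) hy'mem hsy
    have hinvid : Groupoid.inv (𝟙 a) = 𝟙 a := by
      rw [Groupoid.inv_eq_inv]; simp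
    rw [hinvid] at ht
    have hv : t * (s * x) ∈ 𝓡 ⟨a, a, 𝟙 a⟩ := homog_left hgr hx'0 ht
    have hvI : t * (s * x) ∈ I := (hI t _ hx'I).1
    have hvne : t * (s * x) ≠ 0 := by
      intro h0
      have hrep'' := rep_mul_left_id hgr hrep' ht
      exact hty (rep_unique hgr (h0 ▸ hrep'') m hmF')
    exact ideal_top hgr hgs hI hvI hv hvne
  · obtain ⟨s, hs, hsy⟩ := hR a b g (y m) hymem hym
    obtain ⟨F', hrep', hcard', hmemF', _⟩ := rep_mul_right hgr hrep hs
    have hmF' : m ∈ F' := hmemF' m hmF (by rw [hg])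
    have hx'I : x * s ∈ I := (hI s x hxI).2
    have hσ'm : (phiR (Groupoid.inv g) ∘ σ) m = ⟨b, b, 𝟙 b⟩ := by
      simp only [Function.comp_apply, hg]
      rw [phiR_eq (Groupoid.inv g) a b g rfl]
      simp [Groupoid.inv_comp]
    have hx'ne : x * s ≠ 0 := by
      intro h0
      exact hsy (rep_unique hgr (h0 ▸ hrep') m hmF')
    have hx'0 : x * s ∈ grZero 𝓡 :=
      witness_grZero hgr hcent hI hmin hx'I hrep' (le_trans hcard' (le_of_eq hcard)) hmF' hσ'm
    have hy'mem : y m * s ∈ 𝓡 ⟨b, b, 𝟙 b⟩ := by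
      have h3 := hrep'.2.1 m hmF'
      rwa [hσ'm] at h3
    obtain ⟨t, ht, hty⟩ := hR b b (𝟙 b) (y m * s) hy'mem hsy
    have hinvid : Groupoid.inv (𝟙 b) = 𝟙 b := by
      rw [Groupoid.inv_eq_inv]; simp
    rw [hinvid] at ht
    have hv : (x * s) * t ∈ 𝓡 ⟨b, b, 𝟙 b⟩ := homog_right hgr hx'0 ht
    have hvI : (x * s) * t ∈ I := (hI t _ hx'I).2
    have hvne : (x * s) * t ≠ 0 := by
      intro h0
      have hrep'' := rep_mul_right_id hgr hrep' ht
      exact hty (rep_unique hgr (h0 ▸ hrep'') m hmF')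
    exact ideal_top hgr hgs hI hvI hv hvne


end PaperGrpd
end

section
/- Let S be an inverse semigroup and let R be a system over S. Then R is left s-unital epsilon-strong if and only if R is symmetric and for every s ∈ S the ring R_s R_{s*} is left s-unital. Analogously, R is right s-unital epsilon-strong if and only if R is symmetric and for every s ∈ S the ring R_{s*} R_s is right s-unital. -/
open Pointwise

namespace PaperSys

variable {S R : Type*} [Semigroup S] [NonUnitalRing R]

/-! ### Auxiliary lemmas for stmt5 -/

lemma mul_mem_sumProd {A B : AddSubgroup R} {a b : R} (ha : a ∈ A) (hb : b ∈ B) :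
    a * b ∈ sumProd A B :=
  AddSubgroup.subset_closure (Set.mul_mem_mul ha hb)

lemma sumProd_le_s5 {A B C : AddSubgroup R} (h : ∀ a ∈ A, ∀ b ∈ B, a * b ∈ C) :
    sumProd A B ≤ C := by
  rw [sumProd, AddSubgroup.closure_le]
  rintro _ ⟨a, ha, b, hb, rfl⟩
  exact h a ha b hb

/-- Induction over `sumProd`. -/
lemma sumProd_induction {A B : AddSubgroup R} {p : R → Prop}
    (hm : ∀ a ∈ A, ∀ b ∈ B, p (a * b)) (h0 : p 0)
    (hadd : ∀ x y, p x → p y → p (x + y)) (hneg : ∀ x, p x → p (-x)) :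
    ∀ r ∈ sumProd A B, p r := by
  intro r hr
  induction hr using AddSubgroup.closure_induction with
  | mem x hx => obtain ⟨a, ha, b, hb, rfl⟩ := hx; exact hm a ha b hb
  | zero => exact h0
  | add x y _ _ px py => exact hadd x y px py
  | neg x _ px => exact hneg x px

/-- Tominaga's trick, left version. -/
lemma tominaga_left {D : AddSubgroup R}
    (hDD : ∀ u ∈ D, ∀ v ∈ D, u * v ∈ D)
    {b₀ u f : R} (hb₀ : b₀ ∈ D) (hf : f ∈ D)
    (hfu : f * (u - b₀ * u) = u - b₀ * u) :
    ∃ b ∈ D, b * u = u ∧ ∀ x, b₀ * x = x → b * x = x := by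
  refine ⟨b₀ + f - f * b₀, sub_mem (add_mem hb₀ hf) (hDD f hf b₀ hb₀), ?_, ?_⟩
  · have h1 : f * u - f * (b₀ * u) = u - b₀ * u := by rw [← mul_sub, hfu]
    calc (b₀ + f - f * b₀) * u = b₀ * u + (f * u - f * (b₀ * u)) := by
          rw [sub_mul, add_mul, mul_assoc]; abel
      _ = u := by rw [h1]; abel
  · intro x hx
    calc (b₀ + f - f * b₀) * x = b₀ * x + (f * x - f * (b₀ * x)) := by
          rw [sub_mul, add_mul, mul_assoc]; abel
      _ = x := by rw [hx]; abel

/-- Tominaga's trick, right version. -/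
lemma tominaga_right {D : AddSubgroup R}
    (hDD : ∀ u ∈ D, ∀ v ∈ D, u * v ∈ D)
    {b₀ u f : R} (hb₀ : b₀ ∈ D) (hf : f ∈ D)
    (hfu : (u - u * b₀) * f = u - u * b₀) :
    ∃ b ∈ D, u * b = u ∧ ∀ x, x * b₀ = x → x * b = x := by
  refine ⟨b₀ + f - b₀ * f, sub_mem (add_mem hb₀ hf) (hDD b₀ hb₀ f hf), ?_, ?_⟩
  · have h1 : u * f - (u * b₀) * f = u - u * b₀ := by rw [← sub_mul, hfu]
    calc u * (b₀ + f - b₀ * f) = u * b₀ + (u * f - (u * b₀) * f) := by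
          rw [mul_sub, mul_add, ← mul_assoc]; abel
      _ = u := by rw [h1]; abel
  · intro x hx
    calc x * (b₀ + f - b₀ * f) = x * b₀ + (x * f - (x * b₀) * f) := by
          rw [mul_sub, mul_add, ← mul_assoc]; abel
      _ = x := by rw [hx]; abel

/-- Extension induction, left version: if every generator admits a "unit extension",
so does every element of the closure. -/
lemma extend_closure_left {D : AddSubgroup R} {X : Set R}
    (hext : ∀ g ∈ X, ∀ b₀ ∈ D, ∃ b ∈ D, b * g = g ∧ ∀ x, b₀ * x = x → b * x = x) :
    ∀ a ∈ AddSubgroup.closure X, ∃ b ∈ D, b * a = a := by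
  have key : ∀ a ∈ AddSubgroup.closure X, ∀ b₀ ∈ D,
      ∃ b ∈ D, b * a = a ∧ ∀ x, b₀ * x = x → b * x = x := by
    intro a ha
    induction ha using AddSubgroup.closure_induction with
    | mem g hg => exact hext g hg
    | zero => exact fun b₀ hb₀ => ⟨b₀, hb₀, mul_zero b₀, fun x hx => hx⟩
    | add x y hx hy px py =>
      intro b₀ hb₀
      obtain ⟨b₁, hb₁, hb₁x, hb₁ext⟩ := px b₀ hb₀
      obtain ⟨b₂, hb₂, hb₂y, hb₂ext⟩ := py b₁ hb₁
      exact ⟨b₂, hb₂, by rw [mul_add, hb₂y, hb₂ext x hb₁x],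
        fun z hz => hb₂ext z (hb₁ext z hz)⟩
    | neg x hx px =>
      intro b₀ hb₀
      obtain ⟨b, hb, hbx, hbext⟩ := px b₀ hb₀
      exact ⟨b, hb, by rw [mul_neg, hbx], hbext⟩
  intro a ha
  obtain ⟨b, hb, hba, _⟩ := key a ha 0 (zero_mem D)
  exact ⟨b, hb, hba⟩

/-- Extension induction, right version. -/
lemma extend_closure_right {D : AddSubgroup R} {X : Set R}
    (hext : ∀ g ∈ X, ∀ b₀ ∈ D, ∃ b ∈ D, g * b = g ∧ ∀ x, x * b₀ = x → x * b = x) :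
    ∀ a ∈ AddSubgroup.closure X, ∃ b ∈ D, a * b = a := by
  have key : ∀ a ∈ AddSubgroup.closure X, ∀ b₀ ∈ D,
      ∃ b ∈ D, a * b = a ∧ ∀ x, x * b₀ = x → x * b = x := by
    intro a ha
    induction ha using AddSubgroup.closure_induction with
    | mem g hg => exact hext g hg
    | zero => exact fun b₀ hb₀ => ⟨b₀, hb₀, zero_mul b₀, fun x hx => hx⟩
    | add x y hx hy px py =>
      intro b₀ hb₀
      obtain ⟨b₁, hb₁, hb₁x, hb₁ext⟩ := px b₀ hb₀
      obtain ⟨b₂, hb₂, hb₂y, hb₂ext⟩ := py b₁ hb₁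
      exact ⟨b₂, hb₂, by rw [add_mul, hb₂y, hb₂ext x hb₁x],
        fun z hz => hb₂ext z (hb₁ext z hz)⟩
    | neg x hx px =>
      intro b₀ hb₀
      obtain ⟨b, hb, hbx, hbext⟩ := px b₀ hb₀
      exact ⟨b, hb, by rw [neg_mul, hbx], hbext⟩
  intro a ha
  obtain ⟨b, hb, hba, _⟩ := key a ha 0 (zero_mem D)
  exact ⟨b, hb, hba⟩


/-- Let `S` be an inverse semigroup and `R` a system over `S`.
Then `R` is left s-unital epsilon-strong iff `R` is symmetric and for every `s`
the ring `R_s R_{s*}` is left s-unital; and `R` is right s-unital epsilon-strong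
iff `R` is symmetric and for every `s` the ring `R_{s*} R_s` is right s-unital. -/
theorem stmt5 {S R : Type*} [Semigroup S] [NonUnitalRing R]
    (star : S → S) (hstar : IsInverseStar star)
    (𝓡 : S → AddSubgroup R) (hsys : IsSystem 𝓡) :
    (LeftSEps star 𝓡 ↔ IsSymmetricSys star 𝓡 ∧
      ∀ s : S, ∀ a ∈ sumProd (𝓡 s) (𝓡 (star s)),
        ∃ b ∈ sumProd (𝓡 s) (𝓡 (star s)), b * a = a) ∧
    (RightSEps star 𝓡 ↔ IsSymmetricSys star 𝓡 ∧
      ∀ s : S, ∀ a ∈ sumProd (𝓡 (star s)) (𝓡 s),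
        ∃ c ∈ sumProd (𝓡 (star s)) (𝓡 s), a * c = a) := by
  obtain ⟨-, hmul⟩ := hsys
  -- notation
  set D : S → AddSubgroup R := fun s => sumProd (𝓡 s) (𝓡 (star s)) with hD
  set D' : S → AddSubgroup R := fun s => sumProd (𝓡 (star s)) (𝓡 s) with hD'
  -- basic multiplication facts
  have hsss : ∀ s : S, s * star s * s = s := hstar.1
  have hDmulL : ∀ s : S, ∀ u ∈ D s, ∀ x ∈ 𝓡 s, u * x ∈ 𝓡 s := by
    intro s u hu x hx
    refine sumProd_induction (p := fun u => u * x ∈ 𝓡 s) ?_ ?_ ?_ ?_ u hu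
    · intro a ha b hb
      have h1 : b * x ∈ 𝓡 (star s * s) := hmul _ _ b hb x hx
      have h2 : a * (b * x) ∈ 𝓡 (s * (star s * s)) := hmul _ _ a ha _ h1
      rw [mul_assoc]
      rwa [← mul_assoc, hsss s] at h2
    · simp only [zero_mul]; exact zero_mem _
    · intro p q hp hq; simp only [add_mul]; exact add_mem hp hq
    · intro p hp; simp only [neg_mul]; exact neg_mem hp
  have hDmulR : ∀ s : S, ∀ x ∈ 𝓡 s, ∀ u ∈ D' s, x * u ∈ 𝓡 s := by
    intro s x hx u hu
    refine sumProd_induction (p := fun u => x * u ∈ 𝓡 s) ?_ ?_ ?_ ?_ u hu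
    · intro b hb a ha
      have h1 : x * b ∈ 𝓡 (s * star s) := hmul _ _ x hx b hb
      have h2 : (x * b) * a ∈ 𝓡 (s * star s * s) := hmul _ _ _ h1 a ha
      rw [← mul_assoc]
      rwa [hsss s] at h2
    · simp only [mul_zero]; exact zero_mem _
    · intro p q hp hq; simp only [mul_add]; exact add_mem hp hq
    · intro p hp; simp only [mul_neg]; exact neg_mem hp
  have hDDL : ∀ s : S, ∀ u ∈ D s, ∀ v ∈ D s, u * v ∈ D s := by
    intro s u hu v hv
    refine sumProd_induction (p := fun v => u * v ∈ D s) ?_ ?_ ?_ ?_ v hv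
    · intro a ha b hb
      rw [← mul_assoc]
      exact mul_mem_sumProd (hDmulL s u hu a ha) hb
    · simp only [mul_zero]; exact zero_mem _
    · intro p q hp hq; simp only [mul_add]; exact add_mem hp hq
    · intro p hp; simp only [mul_neg]; exact neg_mem hp
  have hDDR : ∀ s : S, ∀ u ∈ D' s, ∀ v ∈ D' s, u * v ∈ D' s := by
    intro s u hu v hv
    refine sumProd_induction (p := fun u => u * v ∈ D' s) ?_ ?_ ?_ ?_ u hu
    · intro b hb a ha
      rw [mul_assoc]
      exact mul_mem_sumProd hb (hDmulR s a ha v hv)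
    · simp only [zero_mul]; exact zero_mem _
    · intro p q hp hq; simp only [add_mul]; exact add_mem hp hq
    · intro p hp; simp only [neg_mul]; exact neg_mem hp
  -- symmetry ⊆ always holds
  have hsymle : ∀ s : S, sumProd (D s) (𝓡 s) ≤ 𝓡 s := fun s =>
    sumProd_le_s5 (hDmulL s)
  constructor
  · -- Left statement
    constructor
    · intro hL
      constructor
      · -- symmetric
        intro s
        refine le_antisymm (hsymle s) ?_
        intro r hr
        obtain ⟨ε, hε, hεr⟩ := hL s r hr
        rw [← hεr]
        exact mul_mem_sumProd hε hr
      · -- D s is left s-unital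
        intro s a ha
        refine extend_closure_left (D := D s) ?_ a ha
        rintro g ⟨x, hx, y, hy, rfl⟩ b₀ hb₀
        have hbx : x - b₀ * x ∈ 𝓡 s := sub_mem hx (hDmulL s b₀ hb₀ x hx)
        obtain ⟨f, hf, hfx⟩ := hL s _ hbx
        obtain ⟨b, hb, hbu, hbext⟩ := tominaga_left (hDDL s) hb₀ hf hfx
        exact ⟨b, hb, by rw [← mul_assoc, hbu], hbext⟩
    · rintro ⟨hsym, huni⟩ s r hr
      have hsymm : ∀ s : S, sumProd (D s) (𝓡 s) = 𝓡 s := hsym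
      have hr' : r ∈ sumProd (D s) (𝓡 s) := by rw [hsymm s]; exact hr
      refine extend_closure_left (D := D s) ?_ r hr'
      rintro g ⟨d, hd, z, hz, rfl⟩ b₀ hb₀
      have hbd : d - b₀ * d ∈ D s := sub_mem hd (hDDL s b₀ hb₀ d hd)
      obtain ⟨f, hf, hfd⟩ := huni s _ hbd
      obtain ⟨b, hb, hbu, hbext⟩ := tominaga_left (hDDL s) hb₀ hf hfd
      exact ⟨b, hb, by rw [← mul_assoc, hbu], hbext⟩
  · -- Right statement
    constructor
    · intro hR
      constructor
      · -- symmetric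
        intro s
        refine le_antisymm (hsymle s) ?_
        intro r hr
        obtain ⟨ε, hε, hεr⟩ := hR s r hr
        rw [← hεr]
        refine sumProd_induction (p := fun ε => r * ε ∈ sumProd (D s) (𝓡 s))
          ?_ ?_ ?_ ?_ ε hε
        · intro y hy x hx
          rw [← mul_assoc]
          exact mul_mem_sumProd (mul_mem_sumProd hr hy) hx
        · simp only [mul_zero]; exact zero_mem _
        · intro p q hp hq; simp only [mul_add]; exact add_mem hp hq
        · intro p hp; simp only [mul_neg]; exact neg_mem hp
      · -- D' s is right s-unital
        intro s a ha
        refine extend_closure_right (D := D' s) ?_ a ha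
        rintro g ⟨y, hy, x, hx, rfl⟩ b₀ hb₀
        have hbx : x - x * b₀ ∈ 𝓡 s := sub_mem hx (hDmulR s x hx b₀ hb₀)
        obtain ⟨f, hf, hfx⟩ := hR s _ hbx
        obtain ⟨b, hb, hbu, hbext⟩ := tominaga_right (hDDR s) hb₀ hf hfx
        exact ⟨b, hb, by rw [mul_assoc, hbu], hbext⟩
    · rintro ⟨hsym, huni⟩ s r hr
      -- r ∈ closure (𝓡 s * D' s)
      have hr' : r ∈ AddSubgroup.closure ((𝓡 s : Set R) * (D' s : Set R)) := by
        have hsymm : ∀ s : S, sumProd (D s) (𝓡 s) = 𝓡 s := hsym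
        have h1 : r ∈ sumProd (D s) (𝓡 s) := by rw [hsymm s]; exact hr
        refine sumProd_le_s5 (C := AddSubgroup.closure ((𝓡 s : Set R) * (D' s : Set R)))
          ?_ h1
        intro d hd z hz
        refine sumProd_induction (p := fun d =>
          d * z ∈ AddSubgroup.closure ((𝓡 s : Set R) * (D' s : Set R))) ?_ ?_ ?_ ?_ d hd
        · intro x hx y hy
          rw [mul_assoc]
          exact AddSubgroup.subset_closure
            (Set.mul_mem_mul hx (mul_mem_sumProd hy hz))
        · simp only [zero_mul]; exact zero_mem _
        · intro p q hp hq; simp only [add_mul]; exact add_mem hp hq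
        · intro p hp; simp only [neg_mul]; exact neg_mem hp
      refine extend_closure_right (D := D' s) ?_ r hr'
      rintro g ⟨z, hz, w, hw, rfl⟩ b₀ hb₀
      have hbw : w - w * b₀ ∈ D' s := sub_mem hw (hDDR s w hw b₀ hb₀)
      obtain ⟨f, hf, hfw⟩ := huni s _ hbw
      obtain ⟨b, hb, hbu, hbext⟩ := tominaga_right (hDDR s) hb₀ hf hfw
      exact ⟨b, hb, by rw [mul_assoc, hbu], hbext⟩


end PaperSys
end
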